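/- Let Z_1, Z_2 be independent standard Lévy(1/2) random variables and let a, b > 0. Then P(a·Z_1 - b·Z_2 < 0) = 1/2 - (2/π)·arctan((√a - √b)/(√a + √b)) = (2/π)·arctan(√(b/a)). -/

import Mathlib

open MeasureTheory ProbabilityTheory Filter
open scoped ENNReal NNReal

noncomputable section

/-- The law of a standard Lévy(1/2) random variable: density
`(2π)^{-1/2} z^{-3/2} exp(-1/(2z))` on `(0,∞)`, `0` elsewhere. -/
def levyHalf : Measure ℝ :=
  volume.withDensity fun z =>
    ENNReal.ofReal (if 0 < z then
      (2 * Real.pi) ^ (-(1 : ℝ) / 2) * z ^ (-(3 : ℝ) / 2) * Real.exp (-1 / (2 * z))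
    else 0)

namespace LevyAux

open Real Set

/-- the normalizing constant -/
def C : ℝ := (2 * Real.pi) ^ (-(1 : ℝ) / 2)

lemma C_pos : 0 < C := Real.rpow_pos_of_pos (by positivity) _

lemma C_mul_C : C * C = (2 * Real.pi)⁻¹ := by
  rw [C, ← Real.rpow_add (by positivity)]
  rw [show (-(1:ℝ)/2 + -(1:ℝ)/2) = (-1:ℝ) by norm_num,
    show ((2*Real.pi) ^ (-1:ℝ)) = (2*Real.pi)⁻¹ by
      rw [Real.rpow_neg (by positivity), Real.rpow_one]]

/-- the Lévy density as a real function -/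
def f (z : ℝ) : ℝ :=
  if 0 < z then (2 * Real.pi) ^ (-(1 : ℝ) / 2) * z ^ (-(3 : ℝ) / 2) * Real.exp (-1 / (2 * z))
  else 0

lemma levyHalf_def : levyHalf = volume.withDensity fun z => ENNReal.ofReal (f z) := rfl

lemma measurable_f : Measurable f := by
  apply Measurable.ite (measurableSet_lt measurable_const measurable_id)
  · exact ((measurable_const.mul (measurable_id.pow_const _)).mul
      (((measurable_const.div ((measurable_const.mul measurable_id)))).exp))
  · exact measurable_const

lemma f_nonneg (z : ℝ) : 0 ≤ f z := by
  rw [f]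
  split_ifs with h
  · positivity
  · exact le_refl 0

/-- 1-D change of variables for lower Lebesgue integrals. -/
lemma lintegral_image_eq {s : Set ℝ} {g g' : ℝ → ℝ}
    (hs : MeasurableSet s) (hg' : ∀ x ∈ s, HasDerivWithinAt g (g' x) s x)
    (hg : Set.InjOn g s) (F : ℝ → ℝ≥0∞) :
    ∫⁻ x in g '' s, F x = ∫⁻ x in s, ENNReal.ofReal |g' x| * F (g x) := by
  simpa only [ContinuousLinearMap.det_toSpanSingleton] using
    MeasureTheory.lintegral_image_eq_lintegral_abs_det_fderiv_mul volume hs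
      (fun x hx => (hg' x hx).hasFDerivWithinAt) hg F

lemma hasDerivAt_T {u : ℝ} (hu : u ≠ 0) :
    HasDerivAt (fun u : ℝ => (u ^ 2)⁻¹) (-2 / u ^ 3) u := by
  have h := (hasDerivAt_pow 2 u).inv (pow_ne_zero 2 hu)
  refine h.congr_deriv ?_
  field_simp
  ring

lemma injOn_T (r : ℝ) (hr : 0 ≤ r) : Set.InjOn (fun u : ℝ => (u ^ 2)⁻¹) (Ioi r) := by
  intro x hx y hy hxy
  have hx0 : 0 < x := lt_of_le_of_lt hr hx
  have hy0 : 0 < y := lt_of_le_of_lt hr hy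
  simp only at hxy
  have hx2 : (x:ℝ)^2 = y^2 := by
    have := congrArg (·⁻¹) hxy
    simpa [inv_inv] using this
  nlinarith

lemma image_T_Ioi {r : ℝ} (hr : 0 < r) :
    (fun u : ℝ => (u ^ 2)⁻¹) '' Ioi r = Ioo 0 ((r ^ 2)⁻¹) := by
  ext y
  constructor
  · rintro ⟨u, hu, rfl⟩
    have hu0 : 0 < u := hr.trans hu
    refine ⟨by positivity, ?_⟩
    have : r ^ 2 < u ^ 2 := by nlinarith [mem_Ioi.mp hu]
    exact inv_strictAnti₀ (by positivity) this
  · rintro ⟨hy0, hy⟩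
    refine ⟨(Real.sqrt y)⁻¹, ?_, ?_⟩
    · have h1 : Real.sqrt y < r⁻¹ := by
        have := Real.sqrt_lt_sqrt hy0.le hy
        rwa [Real.sqrt_inv, Real.sqrt_sq hr.le] at this
      have h2 : (r⁻¹)⁻¹ < (Real.sqrt y)⁻¹ :=
        inv_strictAnti₀ (Real.sqrt_pos.mpr hy0) h1
      rwa [inv_inv] at h2
    · have hsy : 0 < Real.sqrt y := Real.sqrt_pos.mpr hy0
      simp only
      rw [inv_pow, inv_inv, Real.sq_sqrt hy0.le]

lemma image_T_Ioi_zero :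
    (fun u : ℝ => (u ^ 2)⁻¹) '' Ioi 0 = Ioi 0 := by
  ext y
  constructor
  · rintro ⟨u, hu, rfl⟩
    have hu0 : 0 < u := mem_Ioi.mp hu
    exact mem_Ioi.mpr (by positivity)
  · intro hy
    have hy0 : 0 < y := mem_Ioi.mp hy
    refine ⟨(Real.sqrt y)⁻¹, mem_Ioi.mpr (by positivity), ?_⟩
    simp only
    rw [inv_pow, inv_inv, Real.sq_sqrt hy0.le]

lemma density_subst {u : ℝ} (hu : 0 < u) :
    |(-2 / u ^ 3 : ℝ)| * f ((u ^ 2)⁻¹) = 2 * C * Real.exp (-u ^ 2 / 2) := by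
  have h1 : (0:ℝ) < (u ^ 2)⁻¹ := by positivity
  rw [f, if_pos h1]
  have h2 : ((u ^ 2)⁻¹ : ℝ) ^ (-(3 : ℝ) / 2) = u ^ 3 := by
    rw [show (-(3:ℝ)/2) = -(3/2) by norm_num, Real.rpow_neg (by positivity),
      Real.inv_rpow (by positivity), inv_inv, ← Real.rpow_natCast u 2,
      ← Real.rpow_mul hu.le]
    norm_num
  have h3 : (-1 : ℝ) / (2 * (u ^ 2)⁻¹) = -u ^ 2 / 2 := by
    field_simp
  have h4 : |(-2 / u ^ 3 : ℝ)| = 2 / u ^ 3 := by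
    rw [abs_div, abs_neg, abs_of_nonneg (by norm_num : (0:ℝ) ≤ 2),
      abs_of_nonneg (by positivity : (0:ℝ) ≤ u ^ 3)]
  rw [h2, h3, h4, C]
  field_simp

lemma levyHalf_Iio {t : ℝ} (ht : 0 < t) :
    levyHalf (Iio t)
      = ∫⁻ u in Ioi ((Real.sqrt t)⁻¹), ENNReal.ofReal (2 * C * Real.exp (-u ^ 2 / 2)) := by
  rw [levyHalf_def, withDensity_apply _ measurableSet_Iio]
  have hsplit : Iio t = Iic 0 ∪ Ioo 0 t := by
    ext z
    simp only [mem_Iio, mem_union, mem_Iic, mem_Ioo]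
    constructor
    · intro h
      by_cases hz : z ≤ 0
      · exact Or.inl hz
      · exact Or.inr ⟨lt_of_not_ge hz, h⟩
    · rintro (h | ⟨h1, h2⟩)
      · exact lt_of_le_of_lt h ht
      · exact h2
  have hzero : ∫⁻ z in Iic 0, ENNReal.ofReal (f z) = 0 := by
    rw [setLIntegral_congr_fun measurableSet_Iic
      (fun z hz => by
        rw [f, if_neg (not_lt.mpr (mem_Iic.mp hz)), ENNReal.ofReal_zero])]
    simp
  rw [hsplit, lintegral_union measurableSet_Ioo
    (by rw [Set.disjoint_left]; intro z hz hz'; exact absurd hz'.1 (not_lt.mpr hz)),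
    hzero, zero_add]
  have hr : (0:ℝ) < (Real.sqrt t)⁻¹ := by
    have := Real.sqrt_pos.mpr ht
    positivity
  have himg : (fun u : ℝ => (u ^ 2)⁻¹) '' Ioi ((Real.sqrt t)⁻¹) = Ioo 0 t := by
    rw [image_T_Ioi hr, inv_pow, inv_inv, Real.sq_sqrt ht.le]
  rw [← himg, lintegral_image_eq measurableSet_Ioi
    (fun x hx => (hasDerivAt_T (ne_of_gt (hr.trans hx))).hasDerivWithinAt)
    (injOn_T _ hr.le)]
  refine setLIntegral_congr_fun measurableSet_Ioi (fun u hu => ?_)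
  have hu0 : 0 < u := hr.trans hu
  rw [← ENNReal.ofReal_mul (abs_nonneg _), density_subst hu0]

lemma scale_image {v k : ℝ} (hv : 0 < v) :
    (fun t : ℝ => v * t) '' Ioi k = Ioi (v * k) := by
  ext y
  constructor
  · rintro ⟨t, ht, rfl⟩
    exact mem_Ioi.mpr (mul_lt_mul_of_pos_left (mem_Ioi.mp ht) hv)
  · intro hy
    refine ⟨y / v, ?_, ?_⟩
    · rw [mem_Ioi, lt_div_iff₀ hv]
      nlinarith [mem_Ioi.mp hy]
    · show v * (y / v) = y
      field_simp

lemma scale_subst {v k : ℝ} (hv : 0 < v) (F : ℝ → ℝ≥0∞) :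
    ∫⁻ u in Ioi (v * k), F u = ∫⁻ t in Ioi k, ENNReal.ofReal v * F (v * t) := by
  rw [← scale_image hv (k := k), lintegral_image_eq (g := fun t => v * t)
    (g' := fun _ => v) measurableSet_Ioi
    (fun x _ => HasDerivAt.hasDerivWithinAt (by simpa using (hasDerivAt_id x).const_mul v))
    (fun x _ y _ h => by simpa [hv.ne'] using h) F]
  refine setLIntegral_congr_fun measurableSet_Ioi (fun t _ => ?_)
  rw [abs_of_pos hv]

lemma integral_Ioi_id_mul_exp {d : ℝ} (hd : 0 < d) :
    ∫ v in Ioi (0:ℝ), v * Real.exp (-d * v ^ 2) = (2 * d)⁻¹ := by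
  have hderiv : ∀ x ∈ Ici (0:ℝ),
      HasDerivAt (fun x => -(2 * d)⁻¹ * Real.exp (-d * x ^ 2))
        (x * Real.exp (-d * x ^ 2)) x := by
    intro x _
    have h1 : HasDerivAt (fun x : ℝ => -d * x ^ 2) (-d * (2 * x)) x := by
      simpa using (hasDerivAt_pow 2 x).const_mul (-d)
    have h2 := h1.exp.const_mul (-(2 * d)⁻¹)
    refine h2.congr_deriv ?_
    field_simp
  have hint : IntegrableOn (fun x => x * Real.exp (-d * x ^ 2)) (Ioi 0) :=
    (integrable_mul_exp_neg_mul_sq hd).integrableOn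
  have htend : Tendsto (fun x => -(2 * d)⁻¹ * Real.exp (-d * x ^ 2)) atTop (nhds 0) := by
    rw [show (0:ℝ) = -(2 * d)⁻¹ * 0 by ring]
    apply Tendsto.const_mul
    apply Real.tendsto_exp_atBot.comp
    have h1 : Tendsto (fun x : ℝ => d * x ^ 2) atTop atTop :=
      (tendsto_pow_atTop (by norm_num : 2 ≠ 0)).const_mul_atTop hd
    exact Tendsto.congr (fun x => by simp only [Function.comp_apply]; ring)
      (tendsto_neg_atTop_atBot.comp h1)
  have := integral_Ioi_of_hasDerivAt_of_tendsto' hderiv hint htend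
  rw [this]
  norm_num

lemma lintegral_Ioi_mul_exp {d A : ℝ} (hd : 0 < d) (hA : 0 ≤ A) :
    ∫⁻ v in Ioi (0:ℝ), ENNReal.ofReal (A * (v * Real.exp (-d * v ^ 2)))
      = ENNReal.ofReal (A * (2 * d)⁻¹) := by
  rw [← ofReal_integral_eq_lintegral_ofReal
    (((integrable_mul_exp_neg_mul_sq hd).integrableOn).const_mul A)
    ((ae_restrict_iff' measurableSet_Ioi).mpr (ae_of_all _ (fun v hv =>
      mul_nonneg hA (mul_nonneg (le_of_lt hv) (Real.exp_nonneg _)))))]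
  rw [integral_const_mul, integral_Ioi_id_mul_exp hd]

def Q (v t : ℝ) : ℝ≥0∞ :=
  ENNReal.ofReal (4 * (C * C) * (v * Real.exp (-((1 + t ^ 2) / 2) * v ^ 2)))

lemma levyHalf_Iio_inv_sq {c v : ℝ} (hc : 0 < c) (hv : 0 < v) :
    levyHalf (Iio (c * (v ^ 2)⁻¹))
      = ∫⁻ t in Ioi ((Real.sqrt c)⁻¹),
          ENNReal.ofReal v * ENNReal.ofReal (2 * C * Real.exp (-(v * t) ^ 2 / 2)) := by
  rw [levyHalf_Iio (by positivity)]
  have hidx : (Real.sqrt (c * (v ^ 2)⁻¹))⁻¹ = v * (Real.sqrt c)⁻¹ := by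
    rw [Real.sqrt_mul hc.le, Real.sqrt_inv, Real.sqrt_sq hv.le, mul_inv, inv_inv]
    ring
  rw [hidx, scale_subst hv (fun u => ENNReal.ofReal (2 * C * Real.exp (-u ^ 2 / 2)))]

lemma pointwise_eq {c v : ℝ} (hc : 0 < c) (hv : 0 < v) :
    ENNReal.ofReal |(-2 / v ^ 3 : ℝ)| *
      (ENNReal.ofReal (f ((v ^ 2)⁻¹)) * levyHalf (Iio (c * (v ^ 2)⁻¹)))
    = ∫⁻ t in Ioi ((Real.sqrt c)⁻¹), Q v t := by
  rw [← mul_assoc, ← ENNReal.ofReal_mul (abs_nonneg _), density_subst hv,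
    levyHalf_Iio_inv_sq hc hv,
    ← lintegral_const_mul' _ _ ENNReal.ofReal_ne_top]
  refine setLIntegral_congr_fun
    (measurableSet_Ioi : MeasurableSet (Ioi ((Real.sqrt c)⁻¹)))
    (fun t _ => ?_)
  have hCe : (0:ℝ) ≤ 2 * C * Real.exp (-v ^ 2 / 2) :=
    mul_nonneg (mul_nonneg (by norm_num) C_pos.le) (Real.exp_nonneg _)
  rw [Q, ← ENNReal.ofReal_mul hv.le, ← ENNReal.ofReal_mul hCe]

  congr 1
  have hexp : Real.exp (-v ^ 2 / 2) * Real.exp (-(v * t) ^ 2 / 2)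
      = Real.exp (-((1 + t ^ 2) / 2) * v ^ 2) := by
    rw [← Real.exp_add]; congr 1; ring
  calc 2 * C * Real.exp (-v ^ 2 / 2) * (v * (2 * C * Real.exp (-(v * t) ^ 2 / 2)))
      = 4 * (C * C) * (v * (Real.exp (-v ^ 2 / 2) * Real.exp (-(v * t) ^ 2 / 2))) := by ring
    _ = 4 * (C * C) * (v * Real.exp (-((1 + t ^ 2) / 2) * v ^ 2)) := by rw [hexp]

lemma swap_Q (k : ℝ) :
    ∫⁻ v in Ioi (0:ℝ), ∫⁻ t in Ioi k, Q v t
      = ∫⁻ t in Ioi k, ∫⁻ v in Ioi (0:ℝ), Q v t := by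
  apply lintegral_lintegral_swap
  have hcont : Continuous fun p : ℝ × ℝ =>
      4 * (C * C) * (p.1 * Real.exp (-((1 + p.2 ^ 2) / 2) * p.1 ^ 2)) := by fun_prop
  exact (ENNReal.continuous_ofReal.comp hcont).measurable.aemeasurable

lemma inner_Q (t : ℝ) :
    ∫⁻ v in Ioi (0:ℝ), Q v t = ENNReal.ofReal (4 * (C * C) * (1 + t ^ 2)⁻¹) := by
  have hd : (0:ℝ) < (1 + t ^ 2) / 2 := by positivity
  have h := lintegral_Ioi_mul_exp (A := 4 * (C * C)) hd
    (mul_nonneg (by norm_num) (mul_self_nonneg C))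
  rw [show (∫⁻ v in Ioi (0:ℝ), Q v t)
      = ∫⁻ v in Ioi (0:ℝ),
          ENNReal.ofReal (4 * (C * C) * (v * Real.exp (-((1 + t ^ 2) / 2) * v ^ 2))) from rfl,
    h]
  congr 1
  rw [show 2 * ((1 + t ^ 2) / 2) = 1 + t ^ 2 by ring]

lemma outer_Q (k : ℝ) :
    ∫⁻ t in Ioi k, ENNReal.ofReal (4 * (C * C) * (1 + t ^ 2)⁻¹)
      = ENNReal.ofReal (4 * (C * C) * (Real.pi / 2 - Real.arctan k)) := by
  rw [← ofReal_integral_eq_lintegral_ofReal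
      ((integrable_inv_one_add_sq.integrableOn).const_mul _)
      (ae_of_all _ (fun t =>
        mul_nonneg (mul_nonneg (by norm_num) (mul_self_nonneg C)) (by positivity)))]
  rw [integral_const_mul, integral_Ioi_inv_one_add_sq]


end LevyAux

theorem levy_half_diff_neg_prob
    {Ω : Type*} [MeasurableSpace Ω] (μ : Measure Ω) [IsProbabilityMeasure μ]
    (Z₁ Z₂ : Ω → ℝ) (h₁ : Measurable Z₁) (h₂ : Measurable Z₂)
    (hl₁ : μ.map Z₁ = levyHalf) (hl₂ : μ.map Z₂ = levyHalf)
    (hind : IndepFun Z₁ Z₂ μ) (a b : ℝ) (ha : 0 < a) (hb : 0 < b) :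
    (μ {ω | a * Z₁ ω - b * Z₂ ω < 0}).toReal
        = 1 / 2 - (2 / Real.pi) * Real.arctan
            ((Real.sqrt a - Real.sqrt b) / (Real.sqrt a + Real.sqrt b)) ∧
    (μ {ω | a * Z₁ ω - b * Z₂ ω < 0}).toReal
        = (2 / Real.pi) * Real.arctan (Real.sqrt (b / a)) := by
  have hνp : IsProbabilityMeasure levyHalf := hl₁ ▸ Measure.isProbabilityMeasure_map h₁.aemeasurable
  have hc0 : 0 < b / a := div_pos hb ha
  have hsq : 0 < Real.sqrt (b / a) := Real.sqrt_pos.mpr hc0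
  set k : ℝ := (Real.sqrt (b / a))⁻¹ with hk
  have hmeasp : Measurable fun p : ℝ × ℝ => a * p.1 - b * p.2 :=
    (measurable_const.mul measurable_fst).sub (measurable_const.mul measurable_snd)
  have hS : MeasurableSet {p : ℝ × ℝ | a * p.1 - b * p.2 < 0} :=
    measurableSet_lt hmeasp measurable_const
  have hmap : μ.map (fun ω => (Z₁ ω, Z₂ ω)) = levyHalf.prod levyHalf := by
    have h := (indepFun_iff_map_prod_eq_prod_map_map h₁.aemeasurable h₂.aemeasurable).mp hind
    rw [hl₁, hl₂] at h
    exact h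
  have hP1 : μ {ω | a * Z₁ ω - b * Z₂ ω < 0}
      = (levyHalf.prod levyHalf) {p : ℝ × ℝ | a * p.1 - b * p.2 < 0} := by
    rw [← hmap, Measure.map_apply (h₁.prodMk h₂) hS]
    rfl
  have hP2 : (levyHalf.prod levyHalf) {p : ℝ × ℝ | a * p.1 - b * p.2 < 0}
      = ∫⁻ y, levyHalf (Set.Iio (b / a * y)) ∂levyHalf := by
    rw [Measure.prod_apply_symm hS]
    refine lintegral_congr fun y => ?_
    congr 1
    ext x
    simp only [Set.mem_preimage, Set.mem_setOf_eq, Set.mem_Iio]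
    rw [sub_neg, div_mul_eq_mul_div, lt_div_iff₀ ha]
    constructor <;> intro h <;> nlinarith
  have hHmono : Monotone fun y : ℝ => levyHalf (Set.Iio (b / a * y)) := fun y z hyz =>
    measure_mono (Set.Iio_subset_Iio (by nlinarith))
  have hP3 : ∫⁻ y, levyHalf (Set.Iio (b / a * y)) ∂levyHalf
      = ∫⁻ y, ENNReal.ofReal (LevyAux.f y) * levyHalf (Set.Iio (b / a * y)) := by
    exact lintegral_withDensity_eq_lintegral_mul volume
      LevyAux.measurable_f.ennreal_ofReal hHmono.measurable
  have hP4 : ∫⁻ y, ENNReal.ofReal (LevyAux.f y) * levyHalf (Set.Iio (b / a * y))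
      = ∫⁻ y in Set.Ioi (0:ℝ),
          ENNReal.ofReal (LevyAux.f y) * levyHalf (Set.Iio (b / a * y)) := by
    rw [← lintegral_add_compl
      (fun y => ENNReal.ofReal (LevyAux.f y) * levyHalf (Set.Iio (b / a * y)))
      measurableSet_Ioi]
    have hz : ∫⁻ y in (Set.Ioi (0:ℝ))ᶜ,
        ENNReal.ofReal (LevyAux.f y) * levyHalf (Set.Iio (b / a * y)) = 0 := by
      rw [Set.compl_Ioi,
        setLIntegral_congr_fun measurableSet_Iic (fun y hy => by
          rw [LevyAux.f, if_neg (not_lt.mpr hy), ENNReal.ofReal_zero, zero_mul])]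
      simp
    rw [hz, add_zero]
  have hP56 : ∫⁻ y in Set.Ioi (0:ℝ),
        ENNReal.ofReal (LevyAux.f y) * levyHalf (Set.Iio (b / a * y))
      = ∫⁻ v in Set.Ioi (0:ℝ), ∫⁻ t in Set.Ioi k, LevyAux.Q v t := by
    conv_lhs => rw [← LevyAux.image_T_Ioi_zero]
    rw [LevyAux.lintegral_image_eq measurableSet_Ioi
      (fun x hx => (LevyAux.hasDerivAt_T (ne_of_gt hx)).hasDerivWithinAt)
      (LevyAux.injOn_T 0 le_rfl)]
    refine setLIntegral_congr_fun measurableSet_Ioi (fun v hv => ?_)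
    have := LevyAux.pointwise_eq hc0 (Set.mem_Ioi.mp hv)
    simpa [hk] using this
  have hPval : μ {ω | a * Z₁ ω - b * Z₂ ω < 0}
      = ENNReal.ofReal (4 * (LevyAux.C * LevyAux.C) * (Real.pi / 2 - Real.arctan k)) := by
    rw [hP1, hP2, hP3, hP4, hP56, LevyAux.swap_Q]
    rw [lintegral_congr LevyAux.inner_Q, LevyAux.outer_Q]
  have harc : Real.arctan k ≤ Real.pi / 2 := (Real.arctan_lt_pi_div_two k).le
  have hnn : (0:ℝ) ≤ 4 * (LevyAux.C * LevyAux.C) * (Real.pi / 2 - Real.arctan k) :=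
    mul_nonneg (mul_nonneg (by norm_num) (mul_self_nonneg _)) (by linarith)
  have htoReal : (μ {ω | a * Z₁ ω - b * Z₂ ω < 0}).toReal
      = 4 * (LevyAux.C * LevyAux.C) * (Real.pi / 2 - Real.arctan k) := by
    rw [hPval, ENNReal.toReal_ofReal hnn]
  have hπ : Real.pi ≠ 0 := Real.pi_ne_zero
  have hsecond : (μ {ω | a * Z₁ ω - b * Z₂ ω < 0}).toReal
      = (2 / Real.pi) * Real.arctan (Real.sqrt (b / a)) := by
    rw [htoReal, LevyAux.C_mul_C, hk, Real.arctan_inv_of_pos hsq]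
    field_simp
    ring
  refine ⟨?_, hsecond⟩
  rw [hsecond]
  -- arctan identity
  set x : ℝ := Real.sqrt b / Real.sqrt a with hxdef
  have hxeq : Real.sqrt (b / a) = x := Real.sqrt_div hb.le a
  have hx0 : (0:ℝ) ≤ x := by positivity
  have ha' : 0 < Real.sqrt a := Real.sqrt_pos.mpr ha
  have h1x : (0:ℝ) < 1 + x := by positivity
  have harg : (Real.sqrt a - Real.sqrt b) / (Real.sqrt a + Real.sqrt b)
      = (1 - x) / (1 + x) := by
    have hab : (0:ℝ) < Real.sqrt a + Real.sqrt b := by positivity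
    rw [div_eq_div_iff hab.ne' h1x.ne', hxdef]
    field_simp
  have hlt : x * ((1 - x) / (1 + x)) < 1 := by
    rw [← mul_div_assoc, div_lt_one h1x]
    nlinarith [sq_nonneg x]
  have key2 := Real.arctan_add hlt
  have harg2 : (x + (1 - x) / (1 + x)) / (1 - x * ((1 - x) / (1 + x))) = 1 := by
    have hden : 1 - x * ((1 - x) / (1 + x)) = (1 + x ^ 2) / (1 + x) := by
      field_simp
      ring
    rw [div_eq_one_iff_eq (by rw [hden]; positivity)]
    field_simp
    ring
  rw [harg2, Real.arctan_one] at key2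
  rw [hxeq, harg, show Real.arctan ((1 - x) / (1 + x)) = Real.pi / 4 - Real.arctan x by
    linarith]
  field_simp
  ring
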